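/- arXiv:2203.12070 — 2 statements merged into one kernel-verified Lean document; each statement's English description precedes it below -/
import Mathlib

section
/- Let V, H, K be Hilbert spaces with compact inclusion i : V → H and compact linear j : V → K, and 𝔞 : V × V → ℂ a positive symmetric continuous i-elliptic sesquilinear form with V_D = ker j. Assume the self-adjoint operator A^N associated with 𝔞 has no eigenvector in V_D. For μ, λ ∈ ℝ let A_μ be the self-adjoint graph associated with (𝔞_μ, i), where 𝔞_μ(u,v) = 𝔞(u,v) − μ(j(u), j(v))_K, and let N_λ be the self-adjoint graph associated with (𝔟_λ, j), where 𝔟_λ(u,v) = 𝔞(u,v) − λ(u,v)_H. Then λ ∈ σ(A_μ) if and only if μ ∈ σ(N_λ). -/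
/-!
Abstract framework for forms, graphs (linear relations) and their spectra,
following Arendt--ter Elst style form methods.
-/

noncomputable section
open Complex Filter Topology ComplexConjugate

local notation "⟪" x ", " y "⟫" => @inner ℂ _ _ x y

section Defs

variable {V K H W : Type*}
variable [NormedAddCommGroup V] [InnerProductSpace ℂ V]
variable [NormedAddCommGroup K] [InnerProductSpace ℂ K]
variable [NormedAddCommGroup H] [InnerProductSpace ℂ H]

/-- The form `a` is sesquilinear: linear in the first argument and conjugate-linear in the
second argument. -/
def IsSesqui (a : V → V → ℂ) : Prop :=
  (∀ u₁ u₂ v, a (u₁ + u₂) v = a u₁ v + a u₂ v) ∧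
  (∀ u v₁ v₂, a u (v₁ + v₂) = a u v₁ + a u v₂) ∧
  (∀ (c : ℂ) u v, a (c • u) v = c * a u v) ∧
  (∀ (c : ℂ) u v, a u (c • v) = conj c * a u v)

/-- The form `a` is continuous (bounded): `|a u v| ≤ M ‖u‖ ‖v‖`. -/
def IsContinuousForm (a : V → V → ℂ) : Prop :=
  ∃ M : ℝ, 0 < M ∧ ∀ u v, ‖a u v‖ ≤ M * ‖u‖ * ‖v‖

/-- The form `a` is symmetric: `a v u = conj (a u v)`. -/
def IsSymmForm (a : V → V → ℂ) : Prop := ∀ u v, a v u = conj (a u v)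

/-- The form `a` is positive: `a u u ≥ 0` (in particular real) for all `u`. -/
def IsPositiveForm (a : V → V → ℂ) : Prop := ∀ u, 0 ≤ (a u u).re ∧ (a u u).im = 0

/-- The form `a` is `j`-elliptic: `Re (a u u) + ω ‖j u‖² ≥ μ ‖u‖²` with `ω, μ > 0`. -/
def IsElliptic [NormedAddCommGroup W] (a : V → V → ℂ) (j : V → W) : Prop :=
  ∃ ω μ : ℝ, 0 < ω ∧ 0 < μ ∧ ∀ u, μ * ‖u‖ ^ 2 ≤ (a u u).re + ω * ‖j u‖ ^ 2

/-- The graph associated with `(a, j)`: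
`{(j u, f) : u ∈ V, a u v = (f, j v)_K for all v ∈ V}`.  Here `(f, g)_K` denotes the inner
product which is linear in `f`, i.e. `(f, g)_K = ⟪g, f⟫` in Mathlib's convention. -/
def GraphOf (a : V → V → ℂ) (j : V →L[ℂ] K) : Set (K × K) :=
  {p | ∃ u : V, p.1 = j u ∧ ∀ v : V, a u v = ⟪j v, p.2⟫}

/-- The graph associated with `(a|_{W×W}, j|_W)` for a subspace (set) `W ⊆ V`. -/
def GraphOfOn (a : V → V → ℂ) (j : V →L[ℂ] K) (W : Set V) : Set (K × K) :=
  {p | ∃ u ∈ W, p.1 = j u ∧ ∀ v ∈ W, a u v = ⟪j v, p.2⟫}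

/-- The (graph of the) self-adjoint *operator* associated with the form `a|_{W×W}` in the
closure of `i(W)` in `H`:  `u ∈ D(A)` and `A u = f` iff `u ∈ W`, `f ∈ closure (i '' W)` and
`a u v = (f, v)_H` for all `v ∈ W`. -/
def OpGraphOf (a : V → V → ℂ) (i : V →L[ℂ] H) (W : Set V) : Set (H × H) :=
  {p | ∃ u ∈ W, p.1 = i u ∧ p.2 ∈ closure (i '' W) ∧ ∀ v ∈ W, a u v = ⟪i v, p.2⟫}

/-- The adjoint of a graph (linear relation) `A ⊆ K × K`. -/
def AdjointGraph (A : Set (K × K)) : Set (K × K) :=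
  {q | ∀ p ∈ A, ⟪q.1, p.2⟫ = ⟪q.2, p.1⟫}

/-- A graph is self-adjoint if it coincides with its adjoint. -/
def IsSelfAdjointGraph (A : Set (K × K)) : Prop := AdjointGraph A = A

/-- A graph is lower bounded if `(f, x)_K ≥ c ‖x‖²` for all `(x, f)` in the graph. -/
def IsLowerBoundedGraph (A : Set (K × K)) : Prop :=
  ∃ c : ℝ, ∀ p ∈ A, c * ‖p.1‖ ^ 2 ≤ (⟪p.1, p.2⟫).re

/-- A graph has compact resolvent: `(λ I + A)⁻¹` is a compact (everywhere defined, bounded)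
operator for all large real `λ`. -/
def HasCompactResolventGraph (A : Set (K × K)) : Prop :=
  ∃ lam₀ : ℝ, ∀ lam : ℝ, lam₀ ≤ lam → ∃ R : K →L[ℂ] K, IsCompactOperator ⇑R ∧
    (∀ p ∈ A, R ((lam : ℂ) • p.1 + p.2) = p.1) ∧
    (∀ y : K, ∃ p ∈ A, (lam : ℂ) • p.1 + p.2 = y)

/-- The resolvent set of a graph: those `z` for which `(A - z)⁻¹` is an everywhere defined
bounded operator. -/
def GraphResolventSet (A : Set (K × K)) : Set ℂ :=
  {z | ∃ R : K →L[ℂ] K, (∀ p ∈ A, R (p.2 - z • p.1) = p.1) ∧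
        ∀ y : K, ∃ p ∈ A, p.2 - z • p.1 = y}

/-- The spectrum of a graph. -/
def GraphSpectrum (A : Set (K × K)) : Set ℂ := (GraphResolventSet A)ᶜ

/-- `t` is an eigenvalue of the graph `A`. -/
def IsEigenvalueG (A : Set (K × K)) (t : ℂ) : Prop := ∃ x : K, x ≠ 0 ∧ (x, t • x) ∈ A

/-- The spectrum of the graph is discrete: it consists of isolated eigenvalues. -/
def HasDiscreteSpectrumGraph (A : Set (K × K)) : Prop :=
  ∀ z ∈ GraphSpectrum A, IsEigenvalueG A z ∧
    ∃ ε : ℝ, 0 < ε ∧ ∀ w ∈ GraphSpectrum A, w ≠ z → ε ≤ ‖w - z‖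

/-- The multiplicity of `t` as an eigenvalue of the graph `A`: the dimension of the eigenspace
`{x : (x, t x) ∈ A}` (for a graph this set is a subspace of `K`, hence equals its span). -/
def eigMult (A : Set (K × K)) (t : ℝ) : ℕ :=
  Module.finrank ℂ ↥(Submodule.span ℂ {x : K | (x, (t : ℂ) • x) ∈ A})

/-- `lam` is the sequence of eigenvalues of the graph `A`, listed in increasing order and
repeated with multiplicity. -/
def IsEigSeq (A : Set (K × K)) (lam : ℕ → ℝ) : Prop :=
  Monotone lam ∧ (∀ t : ℝ, {n : ℕ | lam n = t}.Finite) ∧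
    ∀ t : ℝ, Nat.card {n : ℕ | lam n = t} = eigMult A t

/-- The multivalued part of a graph. -/
def mulPartG (A : Set (K × K)) : Set K := {f | ((0 : K), f) ∈ A}

/-- The single-valued part of a graph: the pairs whose second component is orthogonal to the
multivalued part. -/
def SingleValuedPartG (A : Set (K × K)) : Set (K × K) :=
  {p | p ∈ A ∧ ∀ m ∈ mulPartG A, ⟪m, p.2⟫ = 0}

/-- The span of `{φ ∈ D(N) : (N° φ, φ)_K = 0}` is infinite dimensional, where `N°` is the
single-valued part of the graph `N`. -/
def InfiniteNullSpan (N : Set (K × K)) : Prop :=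
  ¬ Module.Finite ℂ
      ↥(Submodule.span ℂ {φ : K | ∃ f : K, (φ, f) ∈ SingleValuedPartG N ∧ ⟪φ, f⟫ = 0})

/-- `R` is the resolvent `(I + A)⁻¹` of the graph `A`. -/
def IsResolventAtOne (A : Set (K × K)) (R : K →L[ℂ] K) : Prop :=
  (∀ p ∈ A, R (p.1 + p.2) = p.1) ∧ ∀ y : K, ∃ p ∈ A, p.1 + p.2 = y

end Defs


section Aux

variable {V : Type*} [NormedAddCommGroup V] [InnerProductSpace ℂ V] [CompleteSpace V]

/-- Injective compact perturbation of the identity is bounded below. -/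
lemma aux_boundedBelow (D : V →L[ℂ] V) (hD : IsCompactOperator ⇑D)
    (hker : ∀ x : V, x - D x = 0 → x = 0) :
    ∃ c : ℝ, 0 < c ∧ ∀ x : V, c * ‖x‖ ≤ ‖x - D x‖ := by
  by_contra hc
  push_neg at hc
  have hseq : ∀ n : ℕ, ∃ x : V, ‖x‖ = 1 ∧ ‖x - D x‖ < 1 / (n + 1) := by
    intro n
    obtain ⟨x, hx⟩ := hc (1 / (n + 1)) (by positivity)
    have hx0 : x ≠ 0 := by
      rintro rfl
      simp only [norm_zero, mul_zero, map_zero, sub_zero] at hx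
      exact absurd hx (lt_irrefl 0)
    have hxpos : (0:ℝ) < ‖x‖ := norm_pos_iff.2 hx0
    refine ⟨(‖x‖⁻¹ : ℂ) • x, ?_, ?_⟩
    · simp [norm_smul, inv_mul_cancel₀ (norm_ne_zero_iff.2 hx0)]
    · have hxx : (‖x‖⁻¹ : ℂ) • x - D ((‖x‖⁻¹ : ℂ) • x) = (‖x‖⁻¹ : ℂ) • (x - D x) := by
        rw [map_smul, smul_sub]
      rw [hxx, norm_smul]
      have hn : ‖(‖x‖⁻¹ : ℂ)‖ = ‖x‖⁻¹ := by
        simp [norm_inv]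
      rw [hn, inv_mul_lt_iff₀ hxpos]
      linarith [hx]
  choose x hx1 hx2 using hseq
  obtain ⟨Kc, hKc, hsub⟩ : ∃ Kc : Set V, IsCompact Kc ∧ ∀ n, D (x n) ∈ Kc := by
    refine ⟨closure (⇑D '' Metric.closedBall 0 1), hD.isCompact_closure_image_closedBall 1, ?_⟩
    intro n
    exact subset_closure ⟨x n, by simp [Metric.mem_closedBall, hx1 n], rfl⟩
  obtain ⟨y, _, φ, hφ, hlim⟩ := hKc.tendsto_subseq hsub
  have hdiff : Tendsto (fun n => x (φ n) - D (x (φ n))) atTop (𝓝 0) := by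
    rw [tendsto_iff_norm_sub_tendsto_zero]
    simp only [sub_zero]
    refine squeeze_zero (fun n => norm_nonneg _) (fun n => (hx2 (φ n)).le) ?_
    have h0 : Tendsto (fun n : ℕ => 1 / ((n:ℝ) + 1)) atTop (𝓝 0) :=
      tendsto_one_div_add_atTop_nhds_zero_nat
    exact h0.comp hφ.tendsto_atTop
  have hxlim : Tendsto (fun n => x (φ n)) atTop (𝓝 y) := by
    have := hdiff.add hlim
    simpa using this
  have hy1 : ‖y‖ = 1 := by
    have h1 : Tendsto (fun n => ‖x (φ n)‖) atTop (𝓝 ‖y‖) := hxlim.norm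
    simp only [hx1] at h1
    exact tendsto_nhds_unique h1 tendsto_const_nhds
  have hy0 : y - D y = 0 := by
    have h1 : Tendsto (fun n => x (φ n) - D (x (φ n))) atTop (𝓝 (y - D y)) :=
      hxlim.sub ((D.continuous.tendsto y).comp hxlim)
    exact tendsto_nhds_unique h1 hdiff
  have := hker y hy0
  rw [this] at hy1; simp at hy1

/-- A self-adjoint bounded-below operator on a Hilbert space is bijective, with a bounded
inverse. -/
lemma aux_bijective (T : V →L[ℂ] V) (hsa : ∀ x y : V, ⟪T x, y⟫ = ⟪x, T y⟫)
    {c : ℝ} (hc : 0 < c) (hlow : ∀ x : V, c * ‖x‖ ≤ ‖T x‖) :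
    ∃ R : V →L[ℂ] V, (∀ x, R (T x) = x) ∧ (∀ y, T (R y) = y) := by
  have hanti : AntilipschitzWith ⟨c⁻¹, by positivity⟩ ⇑T := by
    refine T.antilipschitz_of_bound (fun x => ?_)
    show ‖x‖ ≤ c⁻¹ * ‖T x‖
    calc ‖x‖ ≤ ‖T x‖ / c := by rw [le_div_iff₀ hc]; linarith [hlow x]
    _ = c⁻¹ * ‖T x‖ := by ring
  have hinj : Function.Injective ⇑T := hanti.injective
  have hclosed : IsClosed (Set.range ⇑T) := hanti.isClosed_range T.uniformContinuous
  have hclosed' : IsClosed ((LinearMap.range (T : V →ₗ[ℂ] V) : Submodule ℂ V) : Set V) := by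
    have : ((LinearMap.range (T : V →ₗ[ℂ] V) : Submodule ℂ V) : Set V) = Set.range ⇑T :=
      LinearMap.coe_range (T : V →ₗ[ℂ] V)
    rw [this]; exact hclosed
  have : CompleteSpace (LinearMap.range (T : V →ₗ[ℂ] V) : Submodule ℂ V) := hclosed'.completeSpace_coe
  have hbot : (LinearMap.range (T : V →ₗ[ℂ] V))ᗮ = ⊥ := by
    rw [Submodule.eq_bot_iff]
    intro y hy
    have hTy : T y = 0 := by
      apply ext_inner_left ℂ
      intro v
      rw [inner_zero_right, ← hsa v y]
      exact hy (T v) ⟨v, rfl⟩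
    have h2 := hlow y
    rw [hTy, norm_zero] at h2
    have h3 : ‖y‖ ≤ 0 := by nlinarith [norm_nonneg y]
    simpa using le_antisymm h3 (norm_nonneg y)
  have htop : LinearMap.range (T : V →ₗ[ℂ] V) = ⊤ := Submodule.orthogonal_eq_bot_iff.mp hbot
  have hkerbot : LinearMap.ker (T : V →ₗ[ℂ] V) = ⊥ := LinearMap.ker_eq_bot.mpr hinj
  let e := ContinuousLinearEquiv.ofBijective T hkerbot htop
  exact ⟨e.symm.toContinuousLinearMap, fun x => e.symm_apply_apply x, fun y => e.apply_symm_apply y⟩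

/-- Fredholm alternative: a self-adjoint operator which is a compact perturbation of a
self-adjoint bounded-below operator and has trivial kernel is bijective with bounded inverse. -/
lemma aux_fredholm (E C T : V →L[ℂ] V)
    (hEsa : ∀ x y : V, ⟪E x, y⟫ = ⟪x, E y⟫)
    {cE : ℝ} (hcE : 0 < cE) (hElow : ∀ x : V, cE * ‖x‖ ≤ ‖E x‖)
    (hC : IsCompactOperator ⇑C)
    (hTEC : ∀ x, T x = E x - C x)
    (hTsa : ∀ x y : V, ⟪T x, y⟫ = ⟪x, T y⟫)
    (hker : ∀ x : V, T x = 0 → x = 0) :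
    ∃ R : V →L[ℂ] V, (∀ x, R (T x) = x) ∧ (∀ y, T (R y) = y) := by
  obtain ⟨Einv, hE1, hE2⟩ := aux_bijective E hEsa hcE hElow
  set D := Einv.comp C with hD
  have hDc : IsCompactOperator ⇑D := by
    have : ⇑D = ⇑Einv ∘ ⇑C := rfl
    rw [this]
    exact hC.clm_comp Einv
  have hfact : ∀ x, T x = E (x - D x) := by
    intro x
    rw [map_sub, hTEC]
    have hED : E (D x) = C x := hE2 (C x)
    rw [hED]
  have hkerS : ∀ x : V, x - D x = 0 → x = 0 := fun x h => hker x (by rw [hfact, h, map_zero])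
  obtain ⟨c, hc, hlow⟩ := aux_boundedBelow D hDc hkerS
  have hTlow : ∀ x : V, (cE * c) * ‖x‖ ≤ ‖T x‖ := by
    intro x
    rw [hfact]
    calc (cE * c) * ‖x‖ = cE * (c * ‖x‖) := by ring
    _ ≤ cE * ‖x - D x‖ := by nlinarith [hlow x]
    _ ≤ ‖E (x - D x)‖ := hElow _
  exact aux_bijective T hTsa (mul_pos hcE hc) hTlow

/-- Represent a continuous sesquilinear form by a bounded operator: `⟪v, A u⟫ = a u v`. -/
lemma exists_op_of_form (a : V → V → ℂ) (hsesq : IsSesqui a)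
    {M : ℝ} (hM : 0 < M) (hb : ∀ u v, ‖a u v‖ ≤ M * ‖u‖ * ‖v‖) :
    ∃ A : V →L[ℂ] V, ∀ u v, ⟪v, A u⟫ = a u v := by
  obtain ⟨h1, h2, h3, h4⟩ := hsesq
  let g : ∀ u : V, V →L[ℂ] ℂ := fun u =>
    LinearMap.mkContinuous
      { toFun := fun v => conj (a u v)
        map_add' := fun v₁ v₂ => by rw [h2]; exact map_add conj _ _
        map_smul' := fun c v => by
          simp only [RingHom.id_apply, smul_eq_mul]
          rw [h4]
          simp }
      (M * ‖u‖)
      (fun v => by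
        simp only [LinearMap.coe_mk, AddHom.coe_mk, RingHom.id_apply]
        rw [RCLike.norm_conj]
        calc ‖a u v‖ ≤ M * ‖u‖ * ‖v‖ := hb u v)
  have hgapp : ∀ u v, g u v = conj (a u v) := fun u v => rfl
  set td := InnerProductSpace.toDual ℂ V with htd
  have hgadd : ∀ u₁ u₂, g (u₁ + u₂) = g u₁ + g u₂ := by
    intro u₁ u₂; ext v
    simp only [ContinuousLinearMap.add_apply, hgapp, h1]
    exact map_add conj _ _
  have hgsmul : ∀ (c : ℂ) u, g (c • u) = conj c • g u := by
    intro c u; ext v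
    simp only [ContinuousLinearMap.smul_apply, hgapp, h3, smul_eq_mul]
    exact map_mul conj _ _
  refine ⟨LinearMap.mkContinuous
    { toFun := fun u => td.symm (g u)
      map_add' := fun u₁ u₂ => by rw [hgadd]; exact map_add td.symm _ _
      map_smul' := fun c u => by
        simp only [RingHom.id_apply]
        rw [hgsmul]
        rw [LinearIsometryEquiv.map_smulₛₗ]
        simp }
    M (fun u => ?_), fun u v => ?_⟩
  · simp only [LinearMap.coe_mk, AddHom.coe_mk]
    rw [LinearIsometryEquiv.norm_map]
    exact LinearMap.mkContinuous_norm_le _ (by positivity) _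
  · show ⟪v, td.symm (g u)⟫ = a u v
    have h5 : ⟪td.symm (g u), v⟫ = g u v := by
      rw [← InnerProductSpace.toDual_apply_apply, htd, LinearIsometryEquiv.apply_symm_apply]
    rw [← inner_conj_symm, h5, hgapp]
    simp

end Aux

/-- Lemma 2.5, a Birman--Schwinger principle.
With `V`, `H`, `K` Hilbert spaces, `i : V → H` a compact injective embedding, `j : V → K`
compact, `a` a positive symmetric continuous `i`-elliptic form with `V_D = ker j`, and
assuming that the self-adjoint operator `A^N` associated with `a` has no eigenvector in
`V_D`:  for `λ, μ ∈ ℝ` one has `λ ∈ σ(A_μ)` if and only if `μ ∈ σ(N_λ)`, where `A_μ` is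
the self-adjoint graph associated with `(a_μ, i)`, `a_μ(u,v) = a(u,v) - μ (j u, j v)_K`,
and `N_λ` is the self-adjoint graph associated with `(b_λ, j)`,
`b_λ(u,v) = a(u,v) - λ (u,v)_H`. -/
theorem statement4
    {V H K : Type*}
    [NormedAddCommGroup V] [InnerProductSpace ℂ V] [CompleteSpace V]
    [NormedAddCommGroup H] [InnerProductSpace ℂ H] [CompleteSpace H]
    [NormedAddCommGroup K] [InnerProductSpace ℂ K] [CompleteSpace K]
    (i : V →L[ℂ] H) (hinj : Function.Injective ⇑i) (hicpt : IsCompactOperator ⇑i)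
    (j : V →L[ℂ] K) (hjcpt : IsCompactOperator ⇑j)
    (a : V → V → ℂ)
    (hsesq : IsSesqui a) (hpos : IsPositiveForm a) (hsymm : IsSymmForm a)
    (hcont : IsContinuousForm a) (hell : IsElliptic a ⇑i)
    (hI : ∀ (u : V) (t : ℂ), j u = 0 → (i u, t • i u) ∈ OpGraphOf a i Set.univ → u = 0)
    (lam μ : ℝ) :
    (lam : ℂ) ∈ GraphSpectrum
        (GraphOfOn (fun u v => a u v - (μ : ℂ) * @inner ℂ _ _ (j v) (j u)) i Set.univ) ↔
      (μ : ℂ) ∈ GraphSpectrum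
        (GraphOf (fun u v => a u v - (lam : ℂ) * @inner ℂ _ _ (i v) (i u)) j) := by
  classical
  obtain ⟨M, hM, hMb⟩ := hcont
  obtain ⟨ω, μ₀, hω, hμ₀, helli⟩ := hell
  obtain ⟨A₀, hA₀⟩ := exists_op_of_form a hsesq hM hMb
  set IH : V →L[ℂ] V := (ContinuousLinearMap.adjoint i).comp i with hIHdef
  set JK : V →L[ℂ] V := (ContinuousLinearMap.adjoint j).comp j with hJKdef
  have hIHapp : ∀ u v : V, ⟪v, IH u⟫ = ⟪i v, i u⟫ := fun u v =>
    ContinuousLinearMap.adjoint_inner_right i v (i u)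
  have hJKapp : ∀ u v : V, ⟪v, JK u⟫ = ⟪j v, j u⟫ := fun u v =>
    ContinuousLinearMap.adjoint_inner_right j v (j u)
  -- the combined form and its operator
  set cf : V → V → ℂ :=
    fun u v => a u v - (lam : ℂ) * ⟪i v, i u⟫ - (μ : ℂ) * ⟪j v, j u⟫ with hcf
  set T : V →L[ℂ] V := A₀ - (lam : ℂ) • IH - (μ : ℂ) • JK with hTdef
  have hT : ∀ u v : V, ⟪v, T u⟫ = cf u v := by
    intro u v
    simp only [hTdef, ContinuousLinearMap.sub_apply, ContinuousLinearMap.smul_apply,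
      inner_sub_right, inner_smul_right, hA₀, hIHapp, hJKapp, hcf]
  -- hermiticity of the combined form
  have hcfherm : ∀ x y : V, conj (cf x y) = cf y x := by
    intro x y
    simp only [hcf, map_sub, map_mul, Complex.conj_ofReal, inner_conj_symm]
    rw [← hsymm x y]
  have hTsa : ∀ x y : V, ⟪T x, y⟫ = ⟪x, T y⟫ := by
    intro x y
    rw [← inner_conj_symm, hT x y, hcfherm, ← hT y x]
  -- the elliptic operator E
  set Eo : V →L[ℂ] V := A₀ + (ω : ℂ) • IH with hEodef
  have hEo : ∀ u v : V, ⟪v, Eo u⟫ = a u v + (ω : ℂ) * ⟪i v, i u⟫ := by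
    intro u v
    simp only [hEodef, ContinuousLinearMap.add_apply, ContinuousLinearMap.smul_apply,
      inner_add_right, inner_smul_right, hA₀, hIHapp]
  have hEsa : ∀ x y : V, ⟪Eo x, y⟫ = ⟪x, Eo y⟫ := by
    intro x y
    rw [← inner_conj_symm, hEo x y, map_add, map_mul, Complex.conj_ofReal, inner_conj_symm,
      ← hsymm x y, ← hEo y x]
  have hElow : ∀ x : V, μ₀ * ‖x‖ ≤ ‖Eo x‖ := by
    intro x
    have h1 : μ₀ * ‖x‖ ^ 2 ≤ (⟪x, Eo x⟫).re := by
      rw [hEo x x]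
      have h2 : ((ω : ℂ) * ⟪i x, i x⟫).re = ω * ‖i x‖ ^ 2 := by
        rw [inner_self_eq_norm_sq_to_K]
        push_cast
        simp [← Complex.ofReal_pow]
      rw [Complex.add_re, h2]
      exact helli x
    have h3 : (⟪x, Eo x⟫).re ≤ ‖x‖ * ‖Eo x‖ := by
      calc (⟪x, Eo x⟫).re ≤ ‖⟪x, Eo x⟫‖ := Complex.re_le_norm _
      _ ≤ ‖x‖ * ‖Eo x‖ := norm_inner_le_norm x (Eo x)
    rcases eq_or_lt_of_le (norm_nonneg x) with h0 | h0
    · rw [← h0]; simpa using norm_nonneg (Eo x)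
    · have := le_trans h1 h3
      rw [pow_two] at this
      nlinarith
  -- the compact perturbation C
  set Co : V →L[ℂ] V := ((lam : ℂ) + (ω : ℂ)) • IH + (μ : ℂ) • JK with hCodef
  have hIHc : IsCompactOperator ⇑IH := by
    have : ⇑IH = ⇑(ContinuousLinearMap.adjoint i) ∘ ⇑i := rfl
    rw [this]
    exact hicpt.clm_comp (ContinuousLinearMap.adjoint i)
  have hJKc : IsCompactOperator ⇑JK := by
    have : ⇑JK = ⇑(ContinuousLinearMap.adjoint j) ∘ ⇑j := rfl
    rw [this]
    exact hjcpt.clm_comp (ContinuousLinearMap.adjoint j)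
  have hCoc : IsCompactOperator ⇑Co := by
    have h1 : ⇑Co = (((lam : ℂ) + (ω : ℂ)) • ⇑IH) + ((μ : ℂ) • ⇑JK) := by
      funext x; simp [hCodef]
    rw [h1]
    exact (hIHc.smul _).add (hJKc.smul _)
  have hTEC : ∀ x, T x = Eo x - Co x := by
    intro x
    simp only [hTdef, hEodef, hCodef, ContinuousLinearMap.sub_apply,
      ContinuousLinearMap.add_apply, ContinuousLinearMap.smul_apply, add_smul]
    module
  -- the kernel condition
  set K0 : Prop := ∀ u : V, (∀ v : V, cf u v = 0) → u = 0 with hK0def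
  -- P ↔ K0
  have hPK : (lam : ℂ) ∈ GraphResolventSet
      (GraphOfOn (fun u v => a u v - (μ : ℂ) * ⟪j v, j u⟫) i Set.univ) ↔ K0 := by
    constructor
    · rintro ⟨R, hR1, hR2⟩ u hu
      have hmem : ((i u : H), (lam : ℂ) • i u) ∈
          GraphOfOn (fun u v => a u v - (μ : ℂ) * ⟪j v, j u⟫) i Set.univ := by
        refine ⟨u, Set.mem_univ u, rfl, fun v _ => ?_⟩
        rw [inner_smul_right]
        have := hu v
        simp only [hcf] at this
        linear_combination this
      have h0 := hR1 _ hmem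
      simp only at h0
      rw [sub_self, map_zero] at h0
      have : i u = i 0 := by rw [map_zero]; exact h0.symm
      exact hinj this
    · intro hk
      have hker : ∀ x : V, T x = 0 → x = 0 := by
        intro x hx
        refine hk x (fun v => ?_)
        rw [← hT x v, hx, inner_zero_right]
      obtain ⟨Rt, hRt1, hRt2⟩ := aux_fredholm Eo Co T hEsa hμ₀ hElow hCoc hTEC hTsa hker
      refine ⟨i.comp (Rt.comp (ContinuousLinearMap.adjoint i)), ?_, ?_⟩
      · rintro p ⟨u, -, hp1, hp2⟩
        have hTu : T u = (ContinuousLinearMap.adjoint i) (p.2 - (lam : ℂ) • p.1) := by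
          apply ext_inner_left ℂ
          intro v
          rw [hT u v, ContinuousLinearMap.adjoint_inner_right, hp1, inner_sub_right,
            inner_smul_right]
          have := hp2 v (Set.mem_univ v)
          simp only [hcf]
          linear_combination this
        rw [ContinuousLinearMap.comp_apply, ContinuousLinearMap.comp_apply, ← hTu, hRt1, hp1]
      · intro y
        set u : V := Rt ((ContinuousLinearMap.adjoint i) y) with hu
        have hTu : T u = (ContinuousLinearMap.adjoint i) y := hRt2 _
        refine ⟨(i u, y + (lam : ℂ) • i u), ⟨u, Set.mem_univ u, rfl, fun v _ => ?_⟩, by simp⟩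
        have h1 : ⟪i v, y⟫ = cf u v := by
          rw [← hT u v, hTu, ContinuousLinearMap.adjoint_inner_right]
        rw [inner_add_right, inner_smul_right]
        simp only [hcf] at h1
        linear_combination -h1
  -- Q ↔ K0
  have hQK : (μ : ℂ) ∈ GraphResolventSet
      (GraphOf (fun u v => a u v - (lam : ℂ) * ⟪i v, i u⟫) j) ↔ K0 := by
    constructor
    · rintro ⟨R, hR1, hR2⟩ u hu
      by_cases hju : j u = 0
      · refine hI u (lam : ℂ) hju ?_
        refine ⟨u, Set.mem_univ u, rfl, ?_, fun v _ => ?_⟩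
        · exact subset_closure ⟨(lam : ℂ) • u, Set.mem_univ _, by rw [map_smul]⟩
        · have := hu v
          simp only [hcf, hju, inner_zero_right, mul_zero, sub_zero] at this
          rw [inner_smul_right]
          linear_combination this
      · exfalso
        have hmem : ((j u : K), (μ : ℂ) • j u) ∈
            GraphOf (fun u v => a u v - (lam : ℂ) * ⟪i v, i u⟫) j := by
          refine ⟨u, rfl, fun v => ?_⟩
          rw [inner_smul_right]
          have := hu v
          simp only [hcf] at this
          linear_combination this
        have h0 := hR1 _ hmem
        simp only at h0
        rw [sub_self, map_zero] at h0
        exact hju h0.symm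
    · intro hk
      have hker : ∀ x : V, T x = 0 → x = 0 := by
        intro x hx
        refine hk x (fun v => ?_)
        rw [← hT x v, hx, inner_zero_right]
      obtain ⟨Rt, hRt1, hRt2⟩ := aux_fredholm Eo Co T hEsa hμ₀ hElow hCoc hTEC hTsa hker
      refine ⟨j.comp (Rt.comp (ContinuousLinearMap.adjoint j)), ?_, ?_⟩
      · rintro p ⟨u, hp1, hp2⟩
        have hTu : T u = (ContinuousLinearMap.adjoint j) (p.2 - (μ : ℂ) • p.1) := by
          apply ext_inner_left ℂ
          intro v
          rw [hT u v, ContinuousLinearMap.adjoint_inner_right, hp1, inner_sub_right,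
            inner_smul_right]
          have := hp2 v
          simp only [hcf]
          linear_combination this
        rw [ContinuousLinearMap.comp_apply, ContinuousLinearMap.comp_apply, ← hTu, hRt1, hp1]
      · intro y
        set u : V := Rt ((ContinuousLinearMap.adjoint j) y) with hu
        have hTu : T u = (ContinuousLinearMap.adjoint j) y := hRt2 _
        refine ⟨(j u, y + (μ : ℂ) • j u), ⟨u, rfl, fun v => ?_⟩, by simp⟩
        have h1 : ⟪j v, y⟫ = cf u v := by
          rw [← hT u v, hTu, ContinuousLinearMap.adjoint_inner_right]
        rw [inner_add_right, inner_smul_right]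
        simp only [hcf] at h1
        linear_combination -h1
  rw [GraphSpectrum, GraphSpectrum, Set.mem_compl_iff, Set.mem_compl_iff]
  exact not_congr (hPK.trans hQK.symm)
end
end

section
/- Let V, H, K be Hilbert spaces with compact inclusion i : V → H and compact linear j : V → K, and 𝔞 : V × V → ℂ a positive symmetric continuous i-elliptic sesquilinear form. For λ ∈ ℝ let N_λ be the self-adjoint graph associated with (𝔟_λ, j), where 𝔟_λ(u,v) = 𝔞(u,v) − λ(u,v)_H, and let N_λ° be its single-valued part. Let λ > 0 and assume that the span of {φ ∈ D(N_λ) : (N_λ° φ, φ)_K = 0} is infinite-dimensional. Then σ(N_λ) ∩ (−∞, 0) ≠ ∅. -/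
/-!
Abstract framework for forms, graphs (linear relations) and their spectra,
following Arendt--ter Elst style form methods.
-/

noncomputable section
open Complex Filter Topology ComplexConjugate

local notation "⟪" x ", " y "⟫" => @inner ℂ _ _ x y

/-- A closed subspace on which a compact operator is bounded below is finite dimensional. -/
lemma fd_of_compact_bound {V H : Type*}
    [NormedAddCommGroup V] [InnerProductSpace ℂ V] [CompleteSpace V]
    [NormedAddCommGroup H] [InnerProductSpace ℂ H]
    (i : V →L[ℂ] H) (hicpt : IsCompactOperator ⇑i) (Z : Submodule ℂ V)
    (hZc : IsClosed (Z : Set V)) (κ : ℝ)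
    (hbd : ∀ u ∈ Z, ‖u‖ ≤ κ * ‖i u‖) : FiniteDimensional ℂ ↥Z := by
  have hκpos : ∀ u ∈ Z, ‖u‖ ≤ (max κ 1) * ‖i u‖ := by
    intro u hu
    exact (hbd u hu).trans (mul_le_mul_of_nonneg_right (le_max_left _ _) (norm_nonneg _))
  set κ' := max κ 1 with hκ'
  have hκ'pos : 0 < κ' := lt_of_lt_of_le one_pos (le_max_right _ _)
  haveI : CompleteSpace ↥Z := hZc.completeSpace_coe
  set S : Set V := Subtype.val '' (Metric.closedBall (0 : ↥Z) 1) with hS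
  have hSsub : S ⊆ (Z : Set V) := by
    rintro x ⟨y, -, rfl⟩; exact y.2
  have hSbdd : Bornology.IsBounded S := by
    have : S ⊆ Metric.closedBall (0 : V) 1 := by
      rintro x ⟨y, hy, rfl⟩
      simpa [Metric.mem_closedBall, dist_eq_norm] using
        (by simpa [Metric.mem_closedBall, dist_eq_norm] using hy : ‖y‖ ≤ 1)
    exact (Metric.isBounded_closedBall).subset this
  have hTBim : TotallyBounded ((⇑i) '' S) :=
    (hicpt.isCompact_closure_image_of_bounded
      (f := (i : V →ₛₗ[RingHom.id ℂ] H)) hSbdd).totallyBounded.subset subset_closure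
  have hTBS : TotallyBounded S := by
    rw [Metric.totallyBounded_iff]
    intro ε hε
    obtain ⟨t, htsub, htfin, htcov⟩ := totallyBounded_iff_subset.mp hTBim
      {p : H × H | dist p.1 p.2 < ε / κ'} (Metric.dist_mem_uniformity (by positivity))
    choose F hF1 hF2 using fun (y : H) (hy : y ∈ t) => htsub hy
    refine ⟨{x : V | ∃ y hy, F y hy = x}, htfin.dependent_image F, ?_⟩
    intro x hx
    obtain ⟨y, hy, hxy⟩ := Set.mem_iUnion₂.mp (htcov ⟨x, hx, rfl⟩)
    refine Set.mem_iUnion₂.mpr ⟨F y hy, ⟨y, hy, rfl⟩, ?_⟩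
    have hd : dist (i x) (i (F y hy)) < ε / κ' := by
      calc dist (i x) (i (F y hy)) ≤ dist (i x) y + dist y (i (F y hy)) := dist_triangle _ _ _
        _ < ε / κ' + 0 := by
            rw [hF2 y hy, dist_self]
            simpa using hxy
        _ = ε / κ' := by ring
    have hmem : x - F y hy ∈ Z := Z.sub_mem (hSsub hx) (hSsub (hF1 y hy))
    have hb2 : ‖x - F y hy‖ ≤ κ' * ‖i (x - F y hy)‖ := hκpos _ hmem
    rw [Metric.mem_ball, dist_eq_norm]
    have hin : ‖i (x - F y hy)‖ < ε / κ' := by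
      rw [map_sub]; rw [dist_eq_norm] at hd; exact hd
    calc ‖x - F y hy‖ ≤ κ' * ‖i (x - F y hy)‖ := hb2
      _ < κ' * (ε / κ') := by exact (mul_lt_mul_iff_right₀ hκ'pos).mpr hin
      _ = ε := by field_simp
  have hTBball : TotallyBounded (Metric.closedBall (0 : ↥Z) 1) := by
    rw [← totallyBounded_image_iff isUniformEmbedding_subtype_val.isUniformInducing]
    exact hTBS
  have hcpt : IsCompact (Metric.closedBall (0 : ↥Z) 1) :=
    isCompact_iff_totallyBounded_isComplete.mpr
      ⟨hTBball, (Metric.isClosed_closedBall).isComplete⟩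
  exact FiniteDimensional.of_isCompact_closedBall₀ ℂ (r := (1:ℝ)) one_pos hcpt

/-- Lemma 2.7.
With `V`, `H`, `K` Hilbert spaces, `i : V → H` a compact injective embedding, `j : V → K`
compact and `a` a positive symmetric continuous `i`-elliptic form:  let `λ > 0`, let `N_λ`
be the self-adjoint graph associated with `(b_λ, j)` where `b_λ(u,v) = a(u,v) - λ (u,v)_H`,
and assume that the span of `{φ ∈ D(N_λ) : (N_λ° φ, φ)_K = 0}` is infinite dimensional.
Then `σ(N_λ) ∩ (-∞, 0) ≠ ∅`. -/
theorem statement6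
    {V H K : Type*}
    [NormedAddCommGroup V] [InnerProductSpace ℂ V] [CompleteSpace V]
    [NormedAddCommGroup H] [InnerProductSpace ℂ H] [CompleteSpace H]
    [NormedAddCommGroup K] [InnerProductSpace ℂ K] [CompleteSpace K]
    (i : V →L[ℂ] H) (hinj : Function.Injective ⇑i) (hicpt : IsCompactOperator ⇑i)
    (j : V →L[ℂ] K) (hjcpt : IsCompactOperator ⇑j)
    (a : V → V → ℂ)
    (hsesq : IsSesqui a) (hpos : IsPositiveForm a) (hsymm : IsSymmForm a)
    (hcont : IsContinuousForm a) (hell : IsElliptic a ⇑i)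
    (lam : ℝ) (hlam : 0 < lam)
    (hinf : InfiniteNullSpan
      (GraphOf (fun u v => a u v - (lam : ℂ) * @inner ℂ _ _ (i v) (i u)) j)) :
    ∃ μ : ℝ, μ < 0 ∧ (μ : ℂ) ∈ GraphSpectrum
      (GraphOf (fun u v => a u v - (lam : ℂ) * @inner ℂ _ _ (i v) (i u)) j) := by
  classical
  set b : V → V → ℂ := fun u v => a u v - (lam : ℂ) * ⟪i v, i u⟫ with hb
  set N : Set (K × K) := GraphOf b j with hN
  by_contra hcon
  push_neg at hcon
  have hres : ∀ μ : ℝ, μ < 0 → ((μ:ℂ) ∈ GraphResolventSet N) := by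
    intro μ hμ
    have h := hcon μ hμ
    simpa [GraphSpectrum] using h
  -- b is conjugate-symmetric
  have hsym_b : ∀ u w : V, b w u = conj (b u w) := by
    intro u w
    simp only [hb]
    rw [map_sub, map_mul, Complex.conj_ofReal, inner_conj_symm, ← hsymm u w]
  -- the graph N is symmetric
  have hNsym : ∀ p ∈ N, ∀ q ∈ N, ⟪p.1, q.2⟫ = ⟪p.2, q.1⟫ := by
    rintro p ⟨u, hu1, hu2⟩ q ⟨w, hw1, hw2⟩
    calc ⟪p.1, q.2⟫ = b w u := by rw [hu1, ← hw2 u]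
      _ = conj (b u w) := hsym_b u w
      _ = conj ⟪j w, p.2⟫ := by rw [hu2 w]
      _ = ⟪p.2, j w⟫ := inner_conj_symm _ _
      _ = ⟪p.2, q.1⟫ := by rw [← hw1]
  -- the resolvent at -1
  obtain ⟨T, hT1', hT2'⟩ := hres (-1) (by norm_num)
  have hT1 : ∀ p ∈ N, T (p.1 + p.2) = p.1 := by
    intro p hp
    have h := hT1' p hp
    simpa [sub_neg_eq_add, add_comm] using h
  have hT2 : ∀ y : K, ∃ p ∈ N, p.1 + p.2 = y := by
    intro y
    obtain ⟨p, hp, hy⟩ := hT2' y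
    exact ⟨p, hp, by simpa [sub_neg_eq_add, add_comm] using hy⟩
  -- T is symmetric, hence self-adjoint
  have hTsym : (T : K →ₗ[ℂ] K).IsSymmetric := by
    intro x y
    obtain ⟨p, hp, hx⟩ := hT2 x
    obtain ⟨q, hq, hy⟩ := hT2 y
    have hTx : T x = p.1 := by rw [← hx]; exact hT1 p hp
    have hTy : T y = q.1 := by rw [← hy]; exact hT1 q hq
    show ⟪T x, y⟫ = ⟪x, T y⟫
    rw [hTx, hTy, ← hx, ← hy, inner_add_right, inner_add_left, hNsym p hp q hq]
  have hsaT : IsSelfAdjoint T := ContinuousLinearMap.isSelfAdjoint_iff_isSymmetric.mpr hTsym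
  have hTsym' : ∀ x y : K, ⟪T x, y⟫ = ⟪x, T y⟫ := fun x y => hTsym x y
  -- real smul vs complex smul
  have hrsmul : ∀ (r : ℝ) (w : K), r • w = (r:ℂ) • w := by
    intro r w
    rw [← algebraMap_smul ℂ r w, Complex.coe_algebraMap]
  -- the spectrum of T lies in [0,1]
  have hspec : ∀ t : ℝ, t ∈ spectrum ℝ T → 0 ≤ t ∧ t ≤ 1 := by
    intro t ht
    by_contra hcontra
    push_neg at hcontra
    have ht0 : t ≠ 0 := by
      rintro rfl
      exact absurd (hcontra le_rfl) (by norm_num)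
    have hν : 1/t - 1 < 0 := by
      rcases lt_or_ge t 0 with h | h
      · have h1 : 1/t < 0 := one_div_neg.mpr h
        linarith
      · have h1 : 1 < t := hcontra h
        have h2 : 1/t < 1 := by
          rw [div_lt_one (by linarith)]; linarith
        linarith
    set ν : ℝ := 1/t - 1 with hνdef
    obtain ⟨Rν, hR1, hR2⟩ := hres ν hν
    have htsR : t * (ν + 1) = 1 := by
      rw [hνdef]; field_simp; ring
    have hts : (t:ℂ) * ((ν:ℂ) + 1) = 1 := by exact_mod_cast htsR
    set B : K →L[ℂ] K := ((ν:ℂ) + 1) • (1 : K →L[ℂ] K) + ((ν:ℂ) + 1)^2 • Rν with hB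
    set X : K →L[ℂ] K := algebraMap ℝ (K →L[ℂ] K) t - T with hX
    have hxapp : ∀ y : K, X y = (t:ℂ) • y - T y := by
      intro y
      rw [hX, ContinuousLinearMap.sub_apply, Algebra.algebraMap_eq_smul_one,
        ContinuousLinearMap.smul_apply, ContinuousLinearMap.one_apply, hrsmul]
    have hxB : ∀ z : K, X (B z) = z := by
      intro z
      obtain ⟨p, hp, hz⟩ := hR2 z
      have hRz : Rν z = p.1 := by rw [← hz]; exact hR1 p hp
      have hBz : B z = ((ν:ℂ) + 1) • (p.1 + p.2) := by
        rw [hB, ContinuousLinearMap.add_apply, ContinuousLinearMap.smul_apply,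
          ContinuousLinearMap.smul_apply, ContinuousLinearMap.one_apply, hRz, ← hz]
        module
      rw [hxapp, hBz, map_smul, hT1 p hp, ← hz, smul_smul, hts]
      module
    have hBx : ∀ y : K, B (X y) = y := by
      intro y
      obtain ⟨p, hp, hy⟩ := hT2 y
      have hTy : T y = p.1 := by rw [← hy]; exact hT1 p hp
      have hRz : Rν (p.2 - (ν:ℂ) • p.1) = p.1 := hR1 p hp
      have hxy : X y = (t:ℂ) • (p.2 - (ν:ℂ) • p.1) := by
        rw [hxapp, hTy, ← hy]
        match_scalars
        · linear_combination hts
        · ring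
      rw [hxy, hB, ContinuousLinearMap.add_apply, ContinuousLinearMap.smul_apply,
        ContinuousLinearMap.smul_apply, ContinuousLinearMap.one_apply, map_smul, hRz, ← hy]
      match_scalars
      · linear_combination hts
      · linear_combination hts
    have hmul1 : (algebraMap ℝ (K →L[ℂ] K) t - T) * B = 1 := by
      ext z
      rw [ContinuousLinearMap.mul_apply, ContinuousLinearMap.one_apply]
      exact hxB z
    have hmul2 : B * (algebraMap ℝ (K →L[ℂ] K) t - T) = 1 := by
      ext z
      rw [ContinuousLinearMap.mul_apply, ContinuousLinearMap.one_apply]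
      exact hBx z
    exact (spectrum.mem_iff.mp ht) ⟨⟨_, B, hmul1, hmul2⟩, rfl⟩
  -- continuous functional calculus: square root of T - T²
  set g : ℝ → ℝ := fun x => Real.sqrt (x - x^2) with hg
  have hgc : Continuous g := Real.continuous_sqrt.comp (continuous_id.sub (continuous_pow 2))
  set C : K →L[ℂ] K := cfc g T with hC
  have hCsa : IsSelfAdjoint C := cfc_predicate g T
  have hCC : C * C = T - T * T := by
    rw [hC, ← cfc_mul g g T hgc.continuousOn hgc.continuousOn]
    have h1 : (spectrum ℝ T).EqOn (fun x => g x * g x) (fun x : ℝ => x - x^2) := by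
      intro x hx
      have hx01 := hspec x hx
      simp only [hg]
      exact Real.mul_self_sqrt (by nlinarith [hx01.1, hx01.2])
    rw [cfc_congr h1, cfc_sub (fun x : ℝ => x) (fun x : ℝ => x^2) T, cfc_id' ℝ T,
      cfc_pow_id (R := ℝ) T 2, sq]
  -- key step: null vectors of the numerical range are in the kernel of N
  have hker : ∀ φ f0 : K, (φ, f0) ∈ N → ⟪φ, f0⟫ = 0 → ((φ, (0:K)) ∈ N) := by
    intro φ f0 hmem hip
    set y : K := φ + f0 with hy
    have hTy : T y = φ := hT1 (φ, f0) hmem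
    have hCy : C y = 0 := by
      have h1 : ⟪C y, C y⟫ = ⟪y, (C * C) y⟫ := by
        rw [ContinuousLinearMap.mul_apply]
        exact hCsa.isSymmetric y (C y)
      have h2 : ⟪y, (C * C) y⟫ = ⟪f0, φ⟫ := by
        have h3 : (C * C) y = φ - T φ := by
          rw [hCC, ContinuousLinearMap.sub_apply, ContinuousLinearMap.mul_apply, hTy]
        rw [h3, inner_sub_right, ← hTsym' y φ, hTy, hy, inner_add_left]
        ring
      have h4 : ⟪f0, φ⟫ = 0 := by
        rw [← inner_conj_symm, hip, map_zero]
      have h5 : ⟪C y, C y⟫ = (0:ℂ) := by rw [h1, h2, h4]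
      exact inner_self_eq_zero.mp h5
    have hTφ : T φ = φ := by
      have h6 : (C * C) y = φ - T φ := by
        rw [hCC, ContinuousLinearMap.sub_apply, ContinuousLinearMap.mul_apply, hTy]
      have h7 : (C * C) y = 0 := by
        rw [ContinuousLinearMap.mul_apply, hCy, map_zero]
      have h8 : φ - T φ = 0 := by rw [← h6, h7]
      have := sub_eq_zero.mp h8
      exact this.symm
    obtain ⟨q, hq, hqφ⟩ := hT2 φ
    have hq1 : q.1 = φ := by
      have h9 : T φ = q.1 := by rw [← hqφ]; exact hT1 q hq
      rw [← h9, hTφ]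
    have hq2 : q.2 = 0 := by
      have h10 := hqφ
      rw [hq1] at h10
      exact (add_eq_left).mp h10
    have hqeq : q = (φ, (0:K)) := Prod.ext hq1 hq2
    rw [← hqeq]
    exact hq
  -- the kernel subspace in V
  obtain ⟨ω, μ₀, hω, hμ₀, hellb⟩ := hell
  set Z : Submodule ℂ V :=
    { carrier := {u : V | ∀ v : V, b u v = 0}
      add_mem' := by
        intro p q hp hq v
        have h1 := hp v
        have h2 := hq v
        simp only [Set.mem_setOf_eq, hb] at h1 h2 ⊢
        rw [hsesq.1 p q v, map_add, inner_add_right]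
        linear_combination h1 + h2
      zero_mem' := by
        intro v
        have h0 : a 0 v = 0 := by
          have h := hsesq.1 0 0 v
          rw [add_zero] at h
          linear_combination -h
        simp only [Set.mem_setOf_eq, hb, h0, map_zero, inner_zero_right, mul_zero, sub_zero]
      smul_mem' := by
        intro c u hu v
        have h1 := hu v
        simp only [Set.mem_setOf_eq, hb] at h1 ⊢
        rw [hsesq.2.2.1 c u v, map_smul, inner_smul_right]
        linear_combination c * h1 } with hZ
  have hZc : IsClosed ((Z : Set V)) := by
    have hZeq : (Z : Set V) = ⋂ v : V, {u : V | b u v = 0} := by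
      ext u
      simp only [Set.mem_iInter, Set.mem_setOf_eq, SetLike.mem_coe]
      rfl
    rw [hZeq]
    refine isClosed_iInter fun v => ?_
    obtain ⟨M, hM, hMb⟩ := hcont
    have hcont1 : Continuous (fun u : V => a u v) := by
      let L : V →ₗ[ℂ] ℂ :=
        { toFun := fun u => a u v
          map_add' := fun x z => hsesq.1 x z v
          map_smul' := fun c x => hsesq.2.2.1 c x v }
      have hLc : Continuous L := AddMonoidHomClass.continuous_of_bound L (M * ‖v‖) (fun u => by
        calc ‖a u v‖ ≤ M * ‖u‖ * ‖v‖ := hMb u v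
          _ = M * ‖v‖ * ‖u‖ := by ring)
      exact hLc
    have hcont2 : Continuous (fun u : V => (lam:ℂ) * ⟪i v, i u⟫) :=
      continuous_const.mul (Continuous.inner continuous_const i.continuous)
    have hcontb : Continuous (fun u : V => b u v) := by
      simp only [hb]
      exact hcont1.sub hcont2
    exact isClosed_eq hcontb continuous_const
  set κ : ℝ := Real.sqrt ((lam + ω)/μ₀) with hκ
  have hbdZ : ∀ u ∈ Z, ‖u‖ ≤ κ * ‖i u‖ := by
    intro u hu
    have h1 : a u u = (lam:ℂ) * ⟪i u, i u⟫ := by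
      have h := hu u
      simp only [Set.mem_setOf_eq, hb] at h
      exact sub_eq_zero.mp h
    have h2 : (a u u).re = lam * ‖i u‖^2 := by
      have h2a : RCLike.re ⟪i u, i u⟫ = ‖i u‖ ^ 2 := inner_self_eq_norm_sq (i u)
      rw [h1, Complex.mul_re]
      simp only [Complex.ofReal_re, Complex.ofReal_im, zero_mul, sub_zero]
      rw [show (⟪i u, i u⟫ : ℂ).re = RCLike.re ⟪i u, i u⟫ from rfl, h2a]
    have h3 := hellb u
    rw [h2] at h3
    have h4 : ‖u‖^2 ≤ ((lam + ω)/μ₀) * ‖i u‖^2 := by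
      rw [div_mul_eq_mul_div, le_div_iff₀ hμ₀]
      nlinarith
    have h5 : ‖u‖ ≤ Real.sqrt (((lam + ω)/μ₀) * ‖i u‖^2) := by
      rw [← Real.sqrt_sq (norm_nonneg u)]
      exact Real.sqrt_le_sqrt h4
    calc ‖u‖ ≤ Real.sqrt (((lam + ω)/μ₀) * ‖i u‖^2) := h5
      _ = κ * ‖i u‖ := by
        rw [Real.sqrt_mul (by positivity), Real.sqrt_sq (norm_nonneg _), hκ]
  haveI hZfd : FiniteDimensional ℂ ↥Z := fd_of_compact_bound i hicpt Z hZc κ hbdZ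
  apply hinf
  have hle : Submodule.span ℂ
      {φ : K | ∃ f : K, (φ, f) ∈ SingleValuedPartG N ∧ ⟪φ, f⟫ = 0}
      ≤ Z.map (j : V →ₗ[ℂ] K) := by
    rw [Submodule.span_le]
    rintro φ ⟨f0, ⟨hmem, -⟩, hip⟩
    obtain ⟨u, hu1, hu2⟩ := hker φ f0 hmem hip
    refine Submodule.mem_map.mpr ⟨u, ?_, hu1.symm⟩
    intro v
    have h := hu2 v
    simpa using h
  haveI : Module.Finite ℂ ↥(Z.map (j : V →ₗ[ℂ] K)) := Module.Finite.map Z (j : V →ₗ[ℂ] K)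
  exact Submodule.finiteDimensional_of_le hle
end
end
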